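/- Let F⟨x,y⟩ be the free associative algebra over a field F of characteristic p > 0, let m = p^l·r with gcd(p,r) = 1, and let p^t ≥ n. Then the (n,m)-Engel identity implies the (p^{l+t}, r)-Engel identity: in any F-algebra satisfying [a, b^m, …, b^m] = 0 (b^m repeated n times) for all a, b, one also has [a, b^r, …, b^r] = 0 (b^r repeated p^{l+t} times) for all a, b. -/

import Mathlib

/-- The left-normed iterated Lie commutator `[x, y, …, y]` (`n` copies of `y`). -/
def itLie {R : Type*} [Ring R] (x y : R) : ℕ → R
  | 0 => x
  | n + 1 => itLie x y n * y - y * itLie x y n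

lemma itLie_zero_left {R : Type*} [Ring R] (y : R) (k : ℕ) : itLie 0 y k = 0 := by
  induction k with
  | zero => rfl
  | succ k ih => simp [itLie, ih]

lemma itLie_add {R : Type*} [Ring R] (x y : R) (a k : ℕ) :
    itLie x y (a + k) = itLie (itLie x y a) y k := by
  induction k with
  | zero => rfl
  | succ k ih => rw [← Nat.add_assoc]; simp [itLie, ih]

lemma itLie_eq_end (F : Type*) {R : Type*} [Field F] [Ring R] [Algebra F R]
    (x y : R) (k : ℕ) :
    itLie x y k = ((LinearMap.mulRight F y - LinearMap.mulLeft F y) ^ k) x := by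
  induction k with
  | zero => rfl
  | succ k ih =>
    rw [pow_succ']
    simp [itLie, ih, LinearMap.sub_apply, Module.End.mul_apply]

lemma itLie_pow_pow {F : Type*} [Field F] (p : ℕ) [Fact p.Prime] [CharP F p]
    {R : Type*} [Ring R] [Algebra F R] (x y : R) (s k : ℕ) :
    itLie x y (p ^ s * k) = itLie x (y ^ (p ^ s)) k := by
  rcases subsingleton_or_nontrivial R with h | h
  · exact Subsingleton.elim _ _
  haveI : CharP (Module.End F R) p := charP_of_injective_ringHom (algebraMap F (Module.End F R)).injective p
  rw [itLie_eq_end F, itLie_eq_end F, pow_mul]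
  have hc : Commute (LinearMap.mulRight F y) (LinearMap.mulLeft F y) := by
    ext z
    simp [Module.End.mul_apply, mul_assoc]
  rw [sub_pow_char_pow_of_commute p s hc, LinearMap.pow_mulRight,
    LinearMap.pow_mulLeft]

/-- Over a field of characteristic `p > 0`, with `m = pˡ·r`, `gcd(p,r) = 1`
and `pᵗ ≥ n`: any associative `F`-algebra satisfying the `(n,m)`-Engel identity
also satisfies the `(p^{l+t}, r)`-Engel identity. -/
theorem stmt_14 {F : Type*} [Field F] (p : ℕ) [Fact p.Prime] [CharP F p]
    (n m l r t : ℕ) (hn : 0 < n) (hm : m = p ^ l * r) (hr : Nat.Coprime p r)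
    (ht : n ≤ p ^ t)
    (R : Type*) [Ring R] [Algebra F R]
    (hEngel : ∀ a b : R, itLie a (b ^ m) n = 0) :
    ∀ a b : R, itLie a (b ^ r) (p ^ (l + t)) = 0 := by
  intro a b
  have h1 : itLie a (b ^ r) (p ^ (l + t)) = itLie a (b ^ m) (p ^ t) := by
    rw [pow_add, mul_comm (p ^ l) (p ^ t), mul_comm (p ^ t) (p ^ l),
      itLie_pow_pow (F := F) p, ← pow_mul, mul_comm r (p ^ l), ← hm]
  rw [h1, ← Nat.add_sub_cancel' ht, itLie_add, hEngel, itLie_zero_left]
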